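/- Let ψ_n := (P_Γ^c − 1)φ_n = −C_Γ χ_Γ − χ_{Γ^c} φ_n, where C_Γ is the mean of φ_n over Γ. Then for every integer k and 0 < h ≤ π, the Fourier coefficient |ψ̂_n(k)| = |(1/(2π))∫_0^{2π} ψ_n(θ) e^{−ikθ} dθ| ≤ C h, with C independent of n, k and h. -/

import Mathlib

open Real Complex intervalIntegral Set

lemma my_abs_exp_mul_I (a b : ℝ) :
    ‖Complex.exp ((a : ℂ) * (b : ℂ) * Complex.I)‖ = 1 := by
  rw [show ((a : ℂ) * (b : ℂ) * Complex.I) = ((a * b : ℝ) : ℂ) * Complex.I by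
    push_cast; ring]
  exact Complex.norm_exp_ofReal_mul_I _

lemma my_abs_exp_int (n : ℤ) (b : ℝ) :
    ‖Complex.exp ((n : ℂ) * (b : ℂ) * Complex.I)‖ = 1 := by
  rw [show ((n : ℂ)) = (((n : ℝ)) : ℂ) by push_cast; ring]
  exact my_abs_exp_mul_I _ _

lemma my_exp_integral_bound (n : ℤ) (hn : n ≠ 0) (h : ℝ) (h0 : 0 < h) (hπ : h ≤ π) :
    ‖∫ τ in (h/2)..(2*π - h/2), Complex.exp ((n : ℂ) * (τ : ℂ) * Complex.I)‖ ≤ h := by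
  have hc : ((n : ℂ) * Complex.I) ≠ 0 := by
    simp [Complex.ext_iff, hn]
  have hrw : ∀ τ : ℝ, Complex.exp ((n : ℂ) * (τ : ℂ) * Complex.I)
      = Complex.exp (((n : ℂ) * Complex.I) * (τ : ℂ)) := by intro τ; ring_nf
  have hint : ∀ a b : ℝ, IntervalIntegrable
      (fun τ : ℝ => Complex.exp ((n : ℂ) * (τ : ℂ) * Complex.I)) MeasureTheory.volume a b := by
    intro a b
    apply Continuous.intervalIntegrable
    continuity
  have hfull : (∫ τ in (0:ℝ)..(2*π), Complex.exp ((n : ℂ) * (τ : ℂ) * Complex.I)) = 0 := by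
    simp_rw [hrw]
    rw [integral_exp_mul_complex hc, Complex.ofReal_zero, mul_zero, Complex.exp_zero,
      show ((n : ℂ) * Complex.I * ((2*π : ℝ) : ℂ)) = (n : ℂ) * (2 * π * Complex.I) by
        push_cast; ring,
      Complex.exp_int_mul_two_pi_mul_I, sub_self, zero_div]
  have hsplit : (∫ τ in (0:ℝ)..(h/2), Complex.exp ((n : ℂ) * (τ : ℂ) * Complex.I))
      + (∫ τ in (h/2)..(2*π - h/2), Complex.exp ((n : ℂ) * (τ : ℂ) * Complex.I))
      + (∫ τ in (2*π - h/2)..(2*π), Complex.exp ((n : ℂ) * (τ : ℂ) * Complex.I)) = 0 := by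
    rw [intervalIntegral.integral_add_adjacent_intervals (hint _ _) (hint _ _),
      intervalIntegral.integral_add_adjacent_intervals (hint _ _) (hint _ _), hfull]
  have heq : (∫ τ in (h/2)..(2*π - h/2), Complex.exp ((n : ℂ) * (τ : ℂ) * Complex.I))
      = -((∫ τ in (0:ℝ)..(h/2), Complex.exp ((n : ℂ) * (τ : ℂ) * Complex.I))
        + (∫ τ in (2*π - h/2)..(2*π), Complex.exp ((n : ℂ) * (τ : ℂ) * Complex.I))) := by
    linear_combination hsplit
  have hb1 : ‖∫ τ in (0:ℝ)..(h/2), Complex.exp ((n : ℂ) * (τ : ℂ) * Complex.I)‖ ≤ h/2 := by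
    have := intervalIntegral.norm_integral_le_of_norm_le_const (C := 1)
      (f := fun τ : ℝ => Complex.exp ((n : ℂ) * (τ : ℂ) * Complex.I))
      (a := (0:ℝ)) (b := h/2) (fun x _ => by
        show ‖Complex.exp ((n : ℂ) * (x : ℂ) * Complex.I)‖ ≤ 1
        rw [my_abs_exp_int])
    calc _ ≤ 1 * |h/2 - 0| := this
      _ = h/2 := by rw [one_mul, sub_zero, _root_.abs_of_nonneg (by linarith)]
  have hb3 : ‖∫ τ in (2*π - h/2)..(2*π), Complex.exp ((n : ℂ) * (τ : ℂ) * Complex.I)‖ ≤ h/2 := by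
    have := intervalIntegral.norm_integral_le_of_norm_le_const (C := 1)
      (f := fun τ : ℝ => Complex.exp ((n : ℂ) * (τ : ℂ) * Complex.I))
      (a := 2*π - h/2) (b := 2*π) (fun x _ => by
        show ‖Complex.exp ((n : ℂ) * (x : ℂ) * Complex.I)‖ ≤ 1
        rw [my_abs_exp_int])
    calc _ ≤ 1 * |2*π - (2*π - h/2)| := this
      _ = h/2 := by rw [one_mul, show (2*π - (2*π - h/2)) = h/2 by ring,
        _root_.abs_of_nonneg (by linarith)]
  rw [heq, norm_neg]
  calc ‖_‖ ≤ _ + _ := norm_add_le _ _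
    _ ≤ h/2 + h/2 := add_le_add hb1 hb3
    _ = h := by ring

/-- Fourier coefficients of `(P_Γ^c − 1)φ_n = −C_Γ χ_Γ − χ_{Γ^c} φ_n` are
uniformly `O(h)`: there is `C > 0`, independent of `n`, `k` and `h`, such that
`|ψ̂_n(k)| ≤ C h` for all `n ≠ 0`, all `k ∈ ℤ` and `0 < h ≤ π`. Here the circle
is parametrized by `θ ∈ [0, 2π]`, `Γ` corresponds to `[h/2, 2π − h/2]` and
`Γ^c` to the complementary arc of length `h`. -/
theorem stmt_2 :
    ∃ C : ℝ, 0 < C ∧ ∀ (n : ℤ), n ≠ 0 → ∀ (k : ℤ) (h : ℝ), 0 < h → h ≤ π →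
      ‖(1 / (2 * π) : ℂ) *
        ∫ θ in (0:ℝ)..(2 * π),
          (if θ ∈ Icc (h / 2) (2 * π - h / 2) then
              -(((1 / (2 * π - h) : ℂ)) *
                ∫ τ in (h / 2)..(2 * π - h / 2),
                  (1 / Real.sqrt (2 * π) : ℂ) * Complex.exp ((n : ℂ) * (τ : ℂ) * Complex.I))
            else
              -((1 / Real.sqrt (2 * π) : ℂ) * Complex.exp ((n : ℂ) * (θ : ℂ) * Complex.I)))
          * Complex.exp (-(k : ℂ) * (θ : ℂ) * Complex.I)‖
      ≤ C * h := by
  refine ⟨1, one_pos, ?_⟩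
  intro n hn k h h0 hπ
  have hπ2 : (0:ℝ) < 2*π - h := by
    have := Real.pi_pos; linarith
  have hsqrt : (1:ℝ) ≤ Real.sqrt (2*π) := by
    rw [show (1:ℝ) = Real.sqrt 1 by simp]
    apply Real.sqrt_le_sqrt
    have := Real.pi_gt_three; linarith
  have hsqrt0 : (0:ℝ) < Real.sqrt (2*π) := by linarith
  set f : ℝ → ℂ := fun θ =>
    (if θ ∈ Icc (h / 2) (2 * π - h / 2) then
        -(((1 / (2 * π - h) : ℂ)) *
          ∫ τ in (h / 2)..(2 * π - h / 2),
            (1 / Real.sqrt (2 * π) : ℂ) * Complex.exp ((n : ℂ) * (τ : ℂ) * Complex.I))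
      else
        -((1 / Real.sqrt (2 * π) : ℂ) * Complex.exp ((n : ℂ) * (θ : ℂ) * Complex.I)))
    * Complex.exp (-(k : ℂ) * (θ : ℂ) * Complex.I) with hf
  -- bound on the inner integral
  have hA : ‖∫ τ in (h / 2)..(2 * π - h / 2),
      (1 / Real.sqrt (2 * π) : ℂ) * Complex.exp ((n : ℂ) * (τ : ℂ) * Complex.I)‖ ≤ h := by
    rw [intervalIntegral.integral_const_mul, norm_mul]
    have h1 : ‖(1 / Real.sqrt (2 * π) : ℂ)‖ ≤ 1 := by
      rw [show ((1 / Real.sqrt (2 * π) : ℂ)) = ((1 / Real.sqrt (2*π) : ℝ) : ℂ) by push_cast; ring,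
        Complex.norm_real, Real.norm_eq_abs, _root_.abs_of_nonneg (by positivity)]
      rw [div_le_one hsqrt0]; linarith
    calc _ ≤ 1 * h := by
          apply mul_le_mul h1 (my_exp_integral_bound n hn h h0 hπ) (by positivity) one_pos.le
      _ = h := one_mul h
  -- norm of the exp factor
  have hek : ∀ θ : ℝ, ‖Complex.exp (-(k : ℂ) * (θ : ℂ) * Complex.I)‖ = 1 := by
    intro θ
    rw [show (-(k : ℂ) * (θ : ℂ) * Complex.I) = (((-k : ℤ) : ℂ)) * (θ : ℂ) * Complex.I by
      push_cast; ring]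
    exact my_abs_exp_int _ _
  -- the Γ branch value bound
  have hΓ : ‖-(((1 / (2 * π - h) : ℂ)) *
      ∫ τ in (h / 2)..(2 * π - h / 2),
        (1 / Real.sqrt (2 * π) : ℂ) * Complex.exp ((n : ℂ) * (τ : ℂ) * Complex.I))‖
      ≤ h / (2*π - h) := by
    rw [norm_neg, norm_mul]
    have h1 : ‖(1 / (2 * π - h) : ℂ)‖ = 1 / (2*π - h) := by
      rw [show ((1 / (2 * π - h) : ℂ)) = ((1 / (2*π - h) : ℝ) : ℂ) by push_cast; ring,
        Complex.norm_real, Real.norm_eq_abs, _root_.abs_of_nonneg (by positivity)]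
    rw [h1]
    calc 1 / (2*π - h) * ‖_‖ ≤ 1 / (2*π - h) * h :=
          mul_le_mul_of_nonneg_left hA (by positivity)
      _ = h / (2*π - h) := by ring
  have hΓle1 : ‖-(((1 / (2 * π - h) : ℂ)) *
      ∫ τ in (h / 2)..(2 * π - h / 2),
        (1 / Real.sqrt (2 * π) : ℂ) * Complex.exp ((n : ℂ) * (τ : ℂ) * Complex.I))‖ ≤ 1 := by
    refine hΓ.trans ?_
    rw [div_le_one hπ2]
    have := Real.pi_pos; linarith
  -- pointwise bound 1 everywhere
  have hbound : ∀ θ : ℝ, ‖f θ‖ ≤ 1 := by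
    intro θ
    rw [hf]
    simp only [norm_mul, hek θ, mul_one]
    split_ifs with hmem
    · exact hΓle1
    · rw [norm_neg, norm_mul, my_abs_exp_int, mul_one]
      rw [show ((1 / Real.sqrt (2 * π) : ℂ)) = ((1 / Real.sqrt (2*π) : ℝ) : ℂ) by push_cast; ring,
        Complex.norm_real, Real.norm_eq_abs, _root_.abs_of_nonneg (by positivity), div_le_one hsqrt0]
      linarith
  have hmeas : Measurable f := by
    apply Measurable.mul
    · exact Measurable.ite measurableSet_Icc measurable_const (by fun_prop)
    · fun_prop
  have hint : ∀ a b : ℝ, IntervalIntegrable f MeasureTheory.volume a b := by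
    intro a b
    rw [intervalIntegrable_iff]
    haveI : MeasureTheory.IsFiniteMeasure (MeasureTheory.volume.restrict (Set.uIoc a b)) :=
      ⟨by rw [MeasureTheory.Measure.restrict_apply_univ]; exact measure_Ioc_lt_top⟩
    apply MeasureTheory.Integrable.mono' (MeasureTheory.integrable_const 1)
      hmeas.aestronglyMeasurable
    filter_upwards with θ using hbound θ
  have hsplit : (∫ θ in (0:ℝ)..(2*π), f θ)
      = (∫ θ in (0:ℝ)..(h/2), f θ) + (∫ θ in (h/2)..(2*π - h/2), f θ)
        + (∫ θ in (2*π - h/2)..(2*π), f θ) := by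
    rw [intervalIntegral.integral_add_adjacent_intervals (hint _ _) (hint _ _),
      intervalIntegral.integral_add_adjacent_intervals (hint _ _) (hint _ _)]
  -- bounds for the three pieces
  have hI1 : ‖∫ θ in (0:ℝ)..(h/2), f θ‖ ≤ h/2 := by
    have := intervalIntegral.norm_integral_le_of_norm_le_const (C := 1) (f := f)
      (a := (0:ℝ)) (b := h/2) (fun x _ => hbound x)
    calc _ ≤ 1 * |h/2 - 0| := this
      _ = h/2 := by rw [one_mul, sub_zero, _root_.abs_of_nonneg (by linarith)]
  have hI3 : ‖∫ θ in (2*π - h/2)..(2*π), f θ‖ ≤ h/2 := by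
    have := intervalIntegral.norm_integral_le_of_norm_le_const (C := 1) (f := f)
      (a := 2*π - h/2) (b := 2*π) (fun x _ => hbound x)
    calc _ ≤ 1 * |2*π - (2*π - h/2)| := this
      _ = h/2 := by rw [one_mul, show (2*π - (2*π - h/2)) = h/2 by ring,
        _root_.abs_of_nonneg (by linarith)]
  have hI2 : ‖∫ θ in (h/2)..(2*π - h/2), f θ‖ ≤ h := by
    have hmid : ∀ x ∈ Set.uIoc (h/2) (2*π - h/2), ‖f x‖ ≤ h / (2*π - h) := by
      intro x hx
      have hle : h/2 ≤ 2*π - h/2 := by have := Real.pi_pos; linarith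
      rw [Set.uIoc_of_le hle] at hx
      have hxmem : x ∈ Icc (h / 2) (2 * π - h / 2) := ⟨le_of_lt hx.1, hx.2⟩
      rw [hf]
      simp only [norm_mul, hek x, mul_one, if_pos hxmem]
      exact hΓ
    have := intervalIntegral.norm_integral_le_of_norm_le_const hmid
    calc _ ≤ h / (2*π - h) * |2*π - h/2 - h/2| := this
      _ = h := by
          rw [show (2*π - h/2 - h/2) = 2*π - h by ring, _root_.abs_of_nonneg hπ2.le,
            div_mul_cancel₀ _ hπ2.ne']
  -- conclude
  rw [norm_mul]
  have hfrac : ‖(1 / (2 * π) : ℂ)‖ = 1 / (2*π) := by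
    rw [show ((1 / (2 * π) : ℂ)) = ((1 / (2*π) : ℝ) : ℂ) by push_cast; ring,
      Complex.norm_real, Real.norm_eq_abs, _root_.abs_of_nonneg (by positivity)]
  rw [hfrac]
  have htot : ‖∫ θ in (0:ℝ)..(2*π), f θ‖ ≤ 2 * h := by
    rw [hsplit]
    calc ‖_ + _ + _‖ ≤ ‖(∫ θ in (0:ℝ)..(h/2), f θ) + (∫ θ in (h/2)..(2*π - h/2), f θ)‖
          + ‖∫ θ in (2*π - h/2)..(2*π), f θ‖ := norm_add_le _ _
      _ ≤ (‖∫ θ in (0:ℝ)..(h/2), f θ‖ + ‖∫ θ in (h/2)..(2*π - h/2), f θ‖)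
          + ‖∫ θ in (2*π - h/2)..(2*π), f θ‖ := by
            gcongr; exact norm_add_le _ _
      _ ≤ (h/2 + h) + h/2 := by gcongr
      _ = 2 * h := by ring
  calc 1 / (2*π) * ‖∫ θ in (0:ℝ)..(2*π), f θ‖
      ≤ 1 / (2*π) * (2 * h) := mul_le_mul_of_nonneg_left htot (by positivity)
    _ ≤ 1 * h := by
        rw [one_mul, div_mul_eq_mul_div, one_mul, div_le_iff₀ (by positivity)]
        nlinarith [Real.pi_gt_three]
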